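/- Let X = (X_t)_{t∈[0,1]} be a real-valued stochastic process on a probability space (Ω, F, P) with E[X_t²] < ∞ for all t, satisfying (A1) with constants C₁ > 0, H₁ ∈ (0,1], (A2) with constants C₂ > 0, H₂ ∈ (0,1], and (B⁺). Then H₁ ≥ 1/2. -/

import Mathlib

open MeasureTheory Set

/-- Remark 3.1: for a square-integrable process on `[0,1]`, conditions (A1), (A2) and (B⁺)
imply `H₁ ≥ 1/2`. -/
theorem half_le_H1_of_A1_A2_Bplus {Ω : Type*} [MeasurableSpace Ω]
    (P : Measure Ω) [IsProbabilityMeasure P] (X : ℝ → Ω → ℝ)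
    (C₁ C₂ H₁ H₂ : ℝ)
    (hL2 : ∀ t ∈ Set.Icc (0 : ℝ) 1, MemLp (X t) 2 P)
    (hC₁ : 0 < C₁) (hC₂ : 0 < C₂)
    (hH₁ : H₁ ∈ Set.Ioc (0 : ℝ) 1) (hH₂ : H₂ ∈ Set.Ioc (0 : ℝ) 1)
    (hA1 : ∀ s ∈ Set.Icc (0 : ℝ) 1, ∀ t ∈ Set.Icc (0 : ℝ) 1,
      C₁ * |t - s| ^ (2 * H₁) ≤ ∫ ω, (X t ω - X s ω) ^ 2 ∂P)
    (hA2 : ∀ s ∈ Set.Icc (0 : ℝ) 1, ∀ t ∈ Set.Icc (0 : ℝ) 1,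
      ∫ ω, (X t ω - X s ω) ^ 2 ∂P ≤ C₂ * |t - s| ^ (2 * H₂))
    (hB : ∀ s₁ t₁ s₂ t₂ : ℝ, 0 ≤ s₁ → s₁ ≤ t₁ → t₁ ≤ s₂ → s₂ ≤ t₂ → t₂ ≤ 1 →
      0 ≤ ∫ ω, (X t₁ ω - X s₁ ω) * (X t₂ ω - X s₂ ω) ∂P) :
    1 / 2 ≤ H₁ := by
  -- Key estimate: for every n ≥ 1, n * (C₁ * (1/n)^(2H₁)) ≤ C₂.
  have key : ∀ n : ℕ, 1 ≤ n → (n : ℝ) * (C₁ * ((1 : ℝ) / n) ^ (2 * H₁)) ≤ C₂ := by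
    intro n hn
    have hnpos : (0 : ℝ) < n := by exact_mod_cast hn
    set t : ℕ → ℝ := fun i => (i : ℝ) / n with ht
    have hmem : ∀ i : ℕ, i ≤ n → t i ∈ Set.Icc (0 : ℝ) 1 := by
      intro i hi
      constructor
      · positivity
      · rw [div_le_one hnpos]
        exact_mod_cast hi
    have hmono : ∀ i j : ℕ, i ≤ j → t i ≤ t j := by
      intro i j hij
      have : (i : ℝ) ≤ (j : ℝ) := by exact_mod_cast hij
      simp only [ht]
      gcongr
    set f : ℕ → Ω → ℝ := fun i ω => X (t (i + 1)) ω - X (t i) ω with hf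
    have hf2 : ∀ i : ℕ, i < n → MemLp (f i) 2 P := by
      intro i hi
      exact (hL2 _ (hmem _ hi)).sub (hL2 _ (hmem _ (le_of_lt hi)))
    have hint : ∀ i ∈ Finset.range n, ∀ j ∈ Finset.range n,
        Integrable (fun ω => f i ω * f j ω) P := by
      intro i hi j hj
      have h := ((hf2 j (Finset.mem_range.mp hj)).smul (p := 2) (q := 2) (r := 1)
        (hf2 i (Finset.mem_range.mp hi)))
      have h' := memLp_one_iff_integrable.mp h
      exact h'
    have htele : ∀ ω, X 1 ω - X 0 ω = ∑ i ∈ Finset.range n, f i ω := by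
      intro ω
      rw [Finset.sum_range_sub (fun i => X (t i) ω)]
      have h0 : t 0 = 0 := by simp [ht]
      have h1 : t n = 1 := by simp only [ht]; field_simp
      rw [h0, h1]
    -- step 1: expand the square of the telescoping sum
    have step1 : ∫ ω, (X 1 ω - X 0 ω) ^ 2 ∂P
        = ∑ i ∈ Finset.range n, ∑ j ∈ Finset.range n, ∫ ω, f i ω * f j ω ∂P := by
      have hpt : ∀ ω, (X 1 ω - X 0 ω) ^ 2
          = ∑ i ∈ Finset.range n, ∑ j ∈ Finset.range n, f i ω * f j ω := by
        intro ω
        rw [htele ω, sq, Finset.sum_mul_sum]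
      calc ∫ ω, (X 1 ω - X 0 ω) ^ 2 ∂P
          = ∫ ω, ∑ i ∈ Finset.range n, ∑ j ∈ Finset.range n, f i ω * f j ω ∂P := by
            exact integral_congr_ae (Filter.Eventually.of_forall hpt)
        _ = ∑ i ∈ Finset.range n, ∫ ω, ∑ j ∈ Finset.range n, f i ω * f j ω ∂P := by
            exact integral_finset_sum _ (fun i hi => integrable_finset_sum _ (hint i hi))
        _ = ∑ i ∈ Finset.range n, ∑ j ∈ Finset.range n, ∫ ω, f i ω * f j ω ∂P := by
            exact Finset.sum_congr rfl (fun i hi => integral_finset_sum _ (hint i hi))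
    -- all the terms of the double sum are nonnegative
    have hcross : ∀ i ∈ Finset.range n, ∀ j ∈ Finset.range n,
        0 ≤ ∫ ω, f i ω * f j ω ∂P := by
      intro i hi j hj
      rcases lt_trichotomy i j with h | h | h
      · exact hB (t i) (t (i+1)) (t j) (t (j+1)) (hmem _ (le_of_lt (Finset.mem_range.mp hi))).1
          (hmono _ _ (Nat.le_succ i)) (hmono _ _ h) (hmono _ _ (Nat.le_succ j))
          (hmem _ (Finset.mem_range.mp hj)).2
      · subst h
        apply integral_nonneg
        intro ω
        exact mul_self_nonneg _
      · have := hB (t j) (t (j+1)) (t i) (t (i+1)) (hmem _ (le_of_lt (Finset.mem_range.mp hj))).1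
          (hmono _ _ (Nat.le_succ j)) (hmono _ _ h) (hmono _ _ (Nat.le_succ i))
          (hmem _ (Finset.mem_range.mp hi)).2
        simpa [mul_comm] using this
    -- step 2: the sum of diagonal terms is below the full double sum
    have step2 : ∑ i ∈ Finset.range n, (∫ ω, f i ω * f i ω ∂P)
        ≤ ∑ i ∈ Finset.range n, ∑ j ∈ Finset.range n, ∫ ω, f i ω * f j ω ∂P := by
      apply Finset.sum_le_sum
      intro i hi
      exact Finset.single_le_sum (fun j hj => hcross i hi j hj) hi
    -- step 3: each diagonal term is at least C₁ (1/n)^(2H₁)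
    have hgap : ∀ i : ℕ, |t (i+1) - t i| = 1 / n := by
      intro i
      have hd : t (i+1) - t i = 1 / n := by
        simp only [ht]
        push_cast
        field_simp
        ring
      rw [hd, abs_of_pos (by positivity)]
    have step3 : ∀ i ∈ Finset.range n,
        C₁ * ((1 : ℝ) / n) ^ (2 * H₁) ≤ ∫ ω, f i ω * f i ω ∂P := by
      intro i hi
      have := hA1 (t i) (hmem _ (le_of_lt (Finset.mem_range.mp hi)))
        (t (i+1)) (hmem _ (Finset.mem_range.mp hi))
      rw [hgap i] at this
      simpa [hf, sq] using this
    have upper : ∫ ω, (X 1 ω - X 0 ω) ^ 2 ∂P ≤ C₂ := by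
      have := hA2 0 (by norm_num) 1 (by norm_num)
      simpa using this
    calc (n : ℝ) * (C₁ * ((1 : ℝ) / n) ^ (2 * H₁))
        = ∑ _i ∈ Finset.range n, C₁ * ((1 : ℝ) / n) ^ (2 * H₁) := by
          rw [Finset.sum_const, Finset.card_range, nsmul_eq_mul]
      _ ≤ ∑ i ∈ Finset.range n, (∫ ω, f i ω * f i ω ∂P) := Finset.sum_le_sum step3
      _ ≤ ∑ i ∈ Finset.range n, ∑ j ∈ Finset.range n, ∫ ω, f i ω * f j ω ∂P := step2
      _ = ∫ ω, (X 1 ω - X 0 ω) ^ 2 ∂P := step1.symm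
      _ ≤ C₂ := upper
  -- From the key estimate, conclude H₁ ≥ 1/2 by contradiction.
  by_contra hlt
  push_neg at hlt
  set ε : ℝ := 1 - 2 * H₁ with hε
  have hεpos : 0 < ε := by
    simp only [hε]
    linarith
  have keyε : ∀ n : ℕ, 1 ≤ n → C₁ * (n : ℝ) ^ ε ≤ C₂ := by
    intro n hn
    have hnpos : (0 : ℝ) < n := by exact_mod_cast hn
    have h1 : (n : ℝ) * ((1 : ℝ) / n) ^ (2 * H₁) = (n : ℝ) ^ ε := by
      rw [one_div, ← Real.rpow_neg_one (n : ℝ), ← Real.rpow_mul (le_of_lt hnpos),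
        hε]
      nth_rewrite 1 [← Real.rpow_one (n : ℝ)]
      rw [← Real.rpow_add hnpos]
      congr 1
      ring
    have hk := key n hn
    calc C₁ * (n : ℝ) ^ ε = (n : ℝ) * (C₁ * ((1 : ℝ) / n) ^ (2 * H₁)) := by
          rw [← h1]; ring
      _ ≤ C₂ := hk
  -- choose n large enough
  obtain ⟨n, hn⟩ := exists_nat_gt (max 1 ((C₂ / C₁) ^ (1 / ε)))
  have hn1 : 1 ≤ n := by
    have h1n : (1 : ℝ) < n := lt_of_le_of_lt (le_max_left _ _) hn
    exact_mod_cast h1n.le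
  have hbase : (0 : ℝ) ≤ (C₂ / C₁) ^ (1 / ε) := Real.rpow_nonneg (by positivity) _
  have h2 : ((C₂ / C₁) ^ (1 / ε)) ^ ε < (n : ℝ) ^ ε :=
    Real.rpow_lt_rpow hbase (lt_of_le_of_lt (le_max_right _ _) hn) hεpos
  rw [← Real.rpow_mul (by positivity : (0:ℝ) ≤ C₂ / C₁), one_div_mul_cancel hεpos.ne',
    Real.rpow_one] at h2
  have h3 : C₂ < C₁ * (n : ℝ) ^ ε := by
    rw [div_lt_iff₀ hC₁] at h2
    linarith
  exact absurd (keyε n hn1) (not_le.mpr h3)
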